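/- For 0 < |δ| ≤ 1/2 and m ≥ 2 with m|δ| ≥ 1, the sum ∑_{k=2}^m cos(kδ)/k equals −log|δ| + O(1), with the O(1) constant absolute. -/

import Mathlib

open Finset Real

/-- Bound on partial sums of cosines: `|∑_{i<n} cos(iδ)| ≤ π/δ` for `0 < δ ≤ 1/2`. -/
lemma cos_geom_bound {δ : ℝ} (h0 : 0 < δ) (h2 : δ ≤ 1 / 2) (n : ℕ) :
    |∑ i ∈ Finset.range n, Real.cos (i * δ)| ≤ Real.pi / δ := by
  have hπ := Real.pi_pos
  set z : ℂ := Complex.exp (δ * Complex.I) with hz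
  have hre : ∀ i : ℕ, Real.cos (i * δ) = (z ^ i).re := by
    intro i
    rw [hz, ← Complex.exp_nat_mul]
    rw [show (i : ℂ) * (↑δ * Complex.I) = (↑((i : ℝ) * δ)) * Complex.I by push_cast; ring]
    rw [Complex.exp_ofReal_mul_I_re]
  have hz1 : z ≠ 1 := by
    rw [hz, Ne, Complex.exp_eq_one_iff]
    rintro ⟨k, hk⟩
    have h1 : (δ : ℂ) = (k : ℂ) * (2 * ↑Real.pi) := by
      apply mul_right_cancel₀ Complex.I_ne_zero
      rw [hk]; ring
    have h2' : δ = (k : ℝ) * (2 * Real.pi) := by exact_mod_cast h1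
    rcases le_or_gt (k : ℝ) 0 with hk0 | hk0
    · nlinarith
    · have : (1 : ℝ) ≤ (k : ℝ) := by exact_mod_cast hk0
      nlinarith [Real.pi_gt_three]
  have habs1 : ‖z‖ = 1 := Complex.norm_exp_ofReal_mul_I δ
  have hlow : 2 * δ / Real.pi ≤ ‖z - 1‖ := by
    have hre' : z.re = Real.cos δ := Complex.exp_ofReal_mul_I_re δ
    have him : z.im = Real.sin δ := Complex.exp_ofReal_mul_I_im δ
    have hsq : ‖z - 1‖ ^ 2 = 2 - 2 * Real.cos δ := by
      rw [Complex.sq_norm, Complex.normSq_apply, Complex.sub_re, Complex.sub_im, hre', him]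
      have := Real.sin_sq_add_cos_sq δ
      simp only [Complex.one_re, Complex.one_im]
      nlinarith
    have hcosle : Real.cos δ ≤ 1 - 2 / Real.pi ^ 2 * δ ^ 2 := by
      apply Real.cos_le_one_sub_mul_cos_sq
      rw [abs_of_pos h0]
      nlinarith [Real.pi_gt_three]
    have hA : 0 ≤ ‖z - 1‖ := norm_nonneg _
    have hc : 0 < 2 * δ / Real.pi := by positivity
    have heq2 : (2 * δ / Real.pi) ^ 2 = 2 * (2 / Real.pi ^ 2 * δ ^ 2) := by
      field_simp
    have hc2 : (2 * δ / Real.pi) ^ 2 ≤ ‖z - 1‖ ^ 2 := by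
      rw [hsq, heq2]; linarith
    nlinarith [hc2]
  have hsum : ∑ i ∈ Finset.range n, Real.cos (i * δ)
      = (∑ i ∈ Finset.range n, z ^ i).re := by
    rw [Complex.re_sum]
    exact Finset.sum_congr rfl fun i _ => hre i
  rw [hsum]
  calc |(∑ i ∈ Finset.range n, z ^ i).re| ≤ ‖∑ i ∈ Finset.range n, z ^ i‖ :=
        Complex.abs_re_le_norm _
    _ = ‖z ^ n - 1‖ / ‖z - 1‖ := by
        rw [geom_sum_eq hz1, norm_div]
    _ ≤ 2 / (2 * δ / Real.pi) := by
        apply div_le_div₀ (by norm_num) ?_ (by positivity) hlow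
        calc ‖z ^ n - 1‖ ≤ ‖z ^ n‖ + ‖-1‖ := by
              simpa [sub_eq_add_neg] using norm_add_le (z ^ n) (-1)
          _ ≤ 2 := by rw [norm_pow, habs1]; norm_num
    _ = Real.pi / δ := by field_simp
  
/-- Telescoping sum. -/
lemma tele_sum (a : ℕ) : ∀ b, a ≤ b →
    ∑ i ∈ Finset.Ioc a b, (1 / (i : ℝ) - 1 / ((i : ℝ) + 1))
      = 1 / ((a : ℝ) + 1) - 1 / ((b : ℝ) + 1) := by
  intro b
  induction b with
  | zero =>
    intro ha
    have : a = 0 := Nat.le_zero.mp ha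
    simp [this]
  | succ n ih =>
    intro ha
    rcases Nat.lt_or_ge a (n + 1) with h | h
    · have ha' : a ≤ n := by omega
      rw [Finset.sum_Ioc_succ_top ha', ih ha']
      push_cast
      ring
    · have : a = n + 1 := le_antisymm ha h
      simp [this]

/-- Abel summation bound for the tail of the cosine sum. -/
lemma tail_bound {δ : ℝ} (h0 : 0 < δ) (h2 : δ ≤ 1 / 2) {N m : ℕ} (hN : 1 ≤ N) (hNm : N < m) :
    |∑ k ∈ Finset.Ioc N m, Real.cos (k * δ) / k|
      ≤ 3 * (Real.pi / δ) * (1 / ((N : ℝ) + 1)) := by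
  set M := Real.pi / δ with hM
  have hMpos : 0 < M := div_pos Real.pi_pos h0
  set f : ℕ → ℝ := fun i => 1 / (i : ℝ) with hf
  set g : ℕ → ℝ := fun i => Real.cos (i * δ) with hg
  have hG : ∀ n, |∑ i ∈ Finset.range n, g i| ≤ M := fun n => cos_geom_bound h0 h2 n
  have hparts := Finset.sum_Ioc_by_parts f g hNm
  simp only [smul_eq_mul] at hparts
  have heq : ∑ k ∈ Finset.Ioc N m, Real.cos (k * δ) / k
      = ∑ k ∈ Finset.Ioc N m, f k * g k := by
    refine Finset.sum_congr rfl fun k _ => ?_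
    simp only [hf, hg]
    ring
  rw [heq, hparts]
  have habc : ∀ a b c : ℝ, |a - b - c| ≤ |a| + |b| + |c| := by
    intro a b c
    calc |a - b - c| ≤ |a - b| + |c| := by
          simpa [sub_eq_add_neg] using abs_add_le (a - b) (-c)
      _ ≤ |a| + |b| + |c| := by
          have h := abs_add_le a (-b)
          rw [abs_neg] at h
          have : |a - b| ≤ |a| + |b| := by simpa [sub_eq_add_neg] using h
          linarith
  have hNpos : (0 : ℝ) < (N : ℝ) + 1 := by positivity
  have hmN : (N : ℝ) + 1 ≤ (m : ℝ) := by exact_mod_cast hNm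
  have hmpos : (0 : ℝ) < (m : ℝ) := by linarith
  have h1 : |f m * ∑ i ∈ Finset.range (m + 1), g i| ≤ M * (1 / ((N : ℝ) + 1)) := by
    rw [abs_mul]
    have hfm : |f m| = 1 / (m : ℝ) := by
      rw [hf]; simp only; rw [abs_of_nonneg (by positivity)]
    rw [hfm]
    calc (1 / (m : ℝ)) * |∑ i ∈ Finset.range (m + 1), g i| ≤ (1 / (m : ℝ)) * M :=
          mul_le_mul_of_nonneg_left (hG _) (by positivity)
      _ ≤ (1 / ((N : ℝ) + 1)) * M := by
          apply mul_le_mul_of_nonneg_right _ hMpos.le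
          apply one_div_le_one_div_of_le hNpos hmN
      _ = M * (1 / ((N : ℝ) + 1)) := by ring
  have h2' : |f (N + 1) * ∑ i ∈ Finset.range (N + 1 + 1), g i| ≤ M * (1 / ((N : ℝ) + 1)) := by
    rw [abs_mul]
    have hfN : |f (N + 1)| = 1 / ((N : ℝ) + 1) := by
      rw [hf]; simp only; rw [abs_of_nonneg (by positivity)]
      push_cast; ring_nf
    rw [hfN]
    calc (1 / ((N : ℝ) + 1)) * |∑ i ∈ Finset.range (N + 1 + 1), g i|
        ≤ (1 / ((N : ℝ) + 1)) * M := mul_le_mul_of_nonneg_left (hG _) (by positivity)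
      _ = M * (1 / ((N : ℝ) + 1)) := by ring
  have h3 : |∑ i ∈ Finset.Ioc N (m - 1), (f (i + 1) - f i) * ∑ j ∈ Finset.range (i + 1), g j|
      ≤ M * (1 / ((N : ℝ) + 1)) := by
    calc |∑ i ∈ Finset.Ioc N (m - 1), (f (i + 1) - f i) * ∑ j ∈ Finset.range (i + 1), g j|
        ≤ ∑ i ∈ Finset.Ioc N (m - 1),
            |(f (i + 1) - f i) * ∑ j ∈ Finset.range (i + 1), g j| :=
          Finset.abs_sum_le_sum_abs _ _
      _ ≤ ∑ i ∈ Finset.Ioc N (m - 1), (1 / (i : ℝ) - 1 / ((i : ℝ) + 1)) * M := by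
          refine Finset.sum_le_sum fun i hi => ?_
          have hiN : N < i := (Finset.mem_Ioc.mp hi).1
          have hipos : (0 : ℝ) < (i : ℝ) := by
            have : 0 < i := lt_of_le_of_lt (Nat.zero_le N) hiN
            exact_mod_cast this
          rw [abs_mul]
          have hfd : |f (i + 1) - f i| = 1 / (i : ℝ) - 1 / ((i : ℝ) + 1) := by
            rw [abs_sub_comm]
            have hle : f (i + 1) ≤ f i := by
              simp only [hf]
              apply one_div_le_one_div_of_le hipos
              push_cast; linarith
            rw [abs_of_nonneg (by linarith)]
            simp only [hf]
            push_cast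
            ring
          rw [hfd]
          apply mul_le_mul_of_nonneg_left (hG _)
          have : 1 / ((i : ℝ) + 1) ≤ 1 / (i : ℝ) :=
            one_div_le_one_div_of_le hipos (by linarith)
          linarith
      _ = M * ∑ i ∈ Finset.Ioc N (m - 1), (1 / (i : ℝ) - 1 / ((i : ℝ) + 1)) := by
          rw [Finset.mul_sum]
          exact Finset.sum_congr rfl fun i _ => by ring
      _ = M * (1 / ((N : ℝ) + 1) - 1 / (((m - 1 : ℕ) : ℝ) + 1)) := by
          rw [tele_sum N (m - 1) (by omega)]
      _ ≤ M * (1 / ((N : ℝ) + 1)) := by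
          apply mul_le_mul_of_nonneg_left _ hMpos.le
          have : (0 : ℝ) ≤ 1 / (((m - 1 : ℕ) : ℝ) + 1) := by positivity
          linarith
  calc |f m * ∑ i ∈ Finset.range (m + 1), g i
        - f (N + 1) * ∑ i ∈ Finset.range (N + 1), g i
        - ∑ i ∈ Finset.Ioc N (m - 1), (f (i + 1) - f i) * ∑ j ∈ Finset.range (i + 1), g j|
      ≤ |f m * ∑ i ∈ Finset.range (m + 1), g i|
        + |f (N + 1) * ∑ i ∈ Finset.range (N + 1), g i|
        + |∑ i ∈ Finset.Ioc N (m - 1), (f (i + 1) - f i) * ∑ j ∈ Finset.range (i + 1), g j| :=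
        habc _ _ _
    _ ≤ M * (1 / ((N : ℝ) + 1)) + M * (1 / ((N : ℝ) + 1)) + M * (1 / ((N : ℝ) + 1)) := by
        have h2'' : |f (N + 1) * ∑ i ∈ Finset.range (N + 1), g i| ≤ M * (1 / ((N : ℝ) + 1)) := by
          rw [abs_mul]
          have hfN : |f (N + 1)| = 1 / ((N : ℝ) + 1) := by
            rw [hf]; simp only; rw [abs_of_nonneg (by positivity)]
            push_cast; ring_nf
          rw [hfN]
          calc (1 / ((N : ℝ) + 1)) * |∑ i ∈ Finset.range (N + 1), g i|
              ≤ (1 / ((N : ℝ) + 1)) * M := mul_le_mul_of_nonneg_left (hG _) (by positivity)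
            _ = M * (1 / ((N : ℝ) + 1)) := by ring
        linarith [h1, h2'', h3]
    _ = 3 * M * (1 / ((N : ℝ) + 1)) := by ring

set_option maxHeartbeats 1000000 in
lemma main_pos {δ : ℝ} (h0 : 0 < δ) (h2 : δ ≤ 1 / 2) {m : ℕ} (hm : 2 ≤ m)
    (hmδ : 1 ≤ (m : ℝ) * δ) :
    |(∑ k ∈ Finset.Icc 2 m, Real.cos (k * δ) / k) + Real.log δ| ≤ 13 := by
  have hπ := Real.pi_pos
  set N : ℕ := ⌊1 / δ⌋₊ with hN
  have hδinv : (2 : ℝ) ≤ 1 / δ := by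
    rw [le_div_iff₀ h0]; linarith
  have hN2 : 2 ≤ N := Nat.le_floor hδinv
  have hNle : (N : ℝ) ≤ 1 / δ := Nat.floor_le (by positivity)
  have hNδ : (N : ℝ) * δ ≤ 1 := by
    rw [← le_div_iff₀ h0]; exact hNle
  have hNgt : 1 / δ < (N : ℝ) + 1 := Nat.lt_floor_add_one _
  have hN1δ : 1 < ((N : ℝ) + 1) * δ := by
    rw [div_lt_iff₀ h0] at hNgt; linarith
  have hNm : N ≤ m := by
    have : (N : ℝ) ≤ (m : ℝ) := by
      calc (N : ℝ) ≤ 1 / δ := hNle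
        _ ≤ m := by rw [div_le_iff₀ h0]; linarith
    exact_mod_cast this
  have hNpos : (0 : ℝ) < N := by
    have : 0 < N := by omega
    exact_mod_cast this
  -- rewrite Icc 2 m as Ioc 1 m and split
  have hsplit : ∑ k ∈ Finset.Icc 2 m, Real.cos (k * δ) / k
      = (∑ k ∈ Finset.Ioc 1 N, Real.cos (k * δ) / k)
        + ∑ k ∈ Finset.Ioc N m, Real.cos (k * δ) / k := by
    rw [show Finset.Icc 2 m = Finset.Ioc 1 m from (Finset.Icc_add_one_left_eq_Ioc 1 m)]
    rw [Finset.sum_Ioc_consecutive _ (by omega : 1 ≤ N) hNm]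
  -- Part A
  have hA : |∑ k ∈ Finset.Ioc 1 N, (Real.cos (k * δ) / k - 1 / k)| ≤ 1 / 2 := by
    calc |∑ k ∈ Finset.Ioc 1 N, (Real.cos (k * δ) / k - 1 / k)|
        ≤ ∑ k ∈ Finset.Ioc 1 N, |Real.cos (k * δ) / k - 1 / k| :=
          Finset.abs_sum_le_sum_abs _ _
      _ ≤ ∑ k ∈ Finset.Ioc 1 N, (k : ℝ) * δ ^ 2 / 2 := by
          refine Finset.sum_le_sum fun k hk => ?_
          have hk1 : 1 < k := (Finset.mem_Ioc.mp hk).1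
          have hkpos : (0 : ℝ) < (k : ℝ) := by
            have : 0 < k := by omega
            exact_mod_cast this
          have hcb : |Real.cos ((k : ℝ) * δ) - 1| ≤ ((k : ℝ) * δ) ^ 2 / 2 := by
            rw [abs_le]
            constructor
            · nlinarith [Real.one_sub_sq_div_two_le_cos (x := (k : ℝ) * δ)]
            · nlinarith [Real.cos_le_one ((k : ℝ) * δ)]
          have : Real.cos ((k : ℝ) * δ) / k - 1 / k = (Real.cos ((k : ℝ) * δ) - 1) / k := by
            ring
          rw [this, abs_div, abs_of_pos hkpos, div_le_iff₀ hkpos]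
          nlinarith
      _ = δ ^ 2 / 2 * ∑ k ∈ Finset.Ioc 1 N, (k : ℝ) := by
          rw [Finset.mul_sum]
          exact Finset.sum_congr rfl fun k _ => by ring
      _ ≤ δ ^ 2 / 2 * ((N : ℝ) * (N : ℝ)) := by
          apply mul_le_mul_of_nonneg_left _ (by positivity)
          calc ∑ k ∈ Finset.Ioc 1 N, (k : ℝ) ≤ ∑ _k ∈ Finset.Ioc 1 N, (N : ℝ) := by
                refine Finset.sum_le_sum fun k hk => ?_
                exact_mod_cast (Finset.mem_Ioc.mp hk).2
            _ = ((N - 1 : ℕ) : ℝ) * N := by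
                rw [Finset.sum_const, Nat.card_Ioc]
                simp [nsmul_eq_mul]
            _ ≤ (N : ℝ) * N := by
                apply mul_le_mul_of_nonneg_right _ (by positivity)
                exact_mod_cast Nat.sub_le N 1
      _ ≤ 1 / 2 := by nlinarith
  -- Part B
  have hB : |(∑ k ∈ Finset.Ioc 1 N, 1 / (k : ℝ)) - Real.log N| ≤ 1 := by
    have hharm : ∑ k ∈ Finset.Ioc (0 : ℕ) N, 1 / (k : ℝ) = (harmonic N : ℝ) := by
      rw [harmonic_eq_sum_Icc]
      push_cast
      rw [show Finset.Ioc (0 : ℕ) N = Finset.Icc 1 N from (Finset.Icc_add_one_left_eq_Ioc 0 N).symm]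
      exact Finset.sum_congr rfl fun k _ => one_div _
    have hsum01 : ∑ k ∈ Finset.Ioc (0 : ℕ) N, 1 / (k : ℝ)
        = (∑ k ∈ Finset.Ioc (0 : ℕ) 1, 1 / (k : ℝ)) + ∑ k ∈ Finset.Ioc 1 N, 1 / (k : ℝ) :=
      (Finset.sum_Ioc_consecutive _ (by omega) (by omega)).symm
    have hIoc01 : ∑ k ∈ Finset.Ioc (0 : ℕ) 1, 1 / (k : ℝ) = 1 := by
      rw [show Finset.Ioc (0 : ℕ) 1 = {1} by rw [← Finset.Icc_add_one_left_eq_Ioc, zero_add, Finset.Icc_self]]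
      simp
    have hval : ∑ k ∈ Finset.Ioc 1 N, 1 / (k : ℝ) = (harmonic N : ℝ) - 1 := by
      rw [← hharm, hsum01, hIoc01]; ring
    rw [hval]
    have hlo : Real.log ((N : ℝ) + 1) ≤ (harmonic N : ℝ) := by
      have := log_add_one_le_harmonic N
      push_cast at this ⊢
      convert this using 2
    have hhi : (harmonic N : ℝ) ≤ 1 + Real.log N := harmonic_le_one_add_log N
    have hmono : Real.log (N : ℝ) ≤ Real.log ((N : ℝ) + 1) := by
      apply Real.log_le_log (by positivity)
      linarith
    rw [abs_le]
    constructor <;> linarith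
  -- Part C
  have hC : |Real.log N + Real.log δ| ≤ 1 := by
    rw [← Real.log_mul (ne_of_gt hNpos) (ne_of_gt h0)]
    have hprodpos : (0 : ℝ) < (N : ℝ) * δ := by positivity
    have hup : Real.log ((N : ℝ) * δ) ≤ 0 := Real.log_nonpos (by positivity) hNδ
    have hhalf : (1 : ℝ) / 2 ≤ (N : ℝ) * δ := by nlinarith
    have hlo : Real.log (1 / 2) ≤ Real.log ((N : ℝ) * δ) :=
      Real.log_le_log (by norm_num) hhalf
    have hlog2 : Real.log (1 / 2) = -Real.log 2 := by
      rw [one_div, Real.log_inv]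
    have hl2 : Real.log 2 ≤ 1 := by
      have := Real.log_two_lt_d9
      linarith
    have hlo' : -Real.log 2 ≤ Real.log ((N : ℝ) * δ) := hlog2 ▸ hlo
    rw [abs_le]
    exact ⟨by linarith, by linarith⟩
  -- Part D : tail
  have hD : |∑ k ∈ Finset.Ioc N m, Real.cos (k * δ) / k| ≤ 10 := by
    rcases Nat.lt_or_ge N m with hlt | hge
    · have := tail_bound h0 h2 (by omega : 1 ≤ N) hlt
      refine this.trans ?_
      have key : 3 * (Real.pi / δ) * (1 / ((N : ℝ) + 1)) = 3 * Real.pi / (δ * ((N : ℝ) + 1)) := by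
        field_simp
      rw [key]
      have hd1 : (1 : ℝ) ≤ δ * ((N : ℝ) + 1) := by nlinarith
      calc 3 * Real.pi / (δ * ((N : ℝ) + 1)) ≤ 3 * Real.pi / 1 := by
            apply div_le_div_of_nonneg_left (by positivity) (by norm_num) hd1
        _ ≤ 10 := by
            rw [div_one]
            nlinarith [Real.pi_lt_d2]
    · have : N = m := le_antisymm hNm hge
      simp [this]
  -- assemble
  have hdecomp : (∑ k ∈ Finset.Icc 2 m, Real.cos (k * δ) / k) + Real.log δ
      = (∑ k ∈ Finset.Ioc 1 N, (Real.cos (k * δ) / k - 1 / k))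
        + ((∑ k ∈ Finset.Ioc 1 N, 1 / (k : ℝ)) - Real.log N)
        + (Real.log N + Real.log δ)
        + ∑ k ∈ Finset.Ioc N m, Real.cos (k * δ) / k := by
    rw [hsplit, Finset.sum_sub_distrib]
    ring
  rw [hdecomp]
  calc |_ + _ + _ + _| ≤ |(∑ k ∈ Finset.Ioc 1 N, (Real.cos (k * δ) / k - 1 / k))
        + ((∑ k ∈ Finset.Ioc 1 N, 1 / (k : ℝ)) - Real.log N)
        + (Real.log N + Real.log δ)|
        + |∑ k ∈ Finset.Ioc N m, Real.cos (k * δ) / k| := abs_add_le _ _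
    _ ≤ (|(∑ k ∈ Finset.Ioc 1 N, (Real.cos (k * δ) / k - 1 / k))
        + ((∑ k ∈ Finset.Ioc 1 N, 1 / (k : ℝ)) - Real.log N)|
        + |Real.log N + Real.log δ|)
        + |∑ k ∈ Finset.Ioc N m, Real.cos (k * δ) / k| := by
        gcongr
        exact abs_add_le _ _
    _ ≤ ((|∑ k ∈ Finset.Ioc 1 N, (Real.cos (k * δ) / k - 1 / k)|
        + |(∑ k ∈ Finset.Ioc 1 N, 1 / (k : ℝ)) - Real.log N|)
        + |Real.log N + Real.log δ|)
        + |∑ k ∈ Finset.Ioc N m, Real.cos (k * δ) / k| := by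
        gcongr
        exact abs_add_le _ _
    _ ≤ ((1 / 2 + 1) + 1) + 10 := by gcongr
    _ ≤ 13 := by norm_num

/-- Logarithmic asymptotics of the cosine sum: for `0 < |δ| ≤ 1/2` and `m ≥ 2` with
`m|δ| ≥ 1`, `∑_{k=2}^m cos(kδ)/k = −log|δ| + O(1)`, with an absolute `O(1)` constant. -/
theorem cosine_sum_log_asymptotics :
    ∃ C : ℝ, 0 < C ∧ ∀ (δ : ℝ) (m : ℕ), 0 < abs δ → abs δ ≤ 1 / 2 → 2 ≤ m →
      1 ≤ (m : ℝ) * abs δ →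
      abs ((∑ k ∈ Finset.Icc 2 m, Real.cos (k * δ) / k) + Real.log (abs δ)) ≤ C := by
  refine ⟨13, by norm_num, fun δ m habs h12 hm hmδ => ?_⟩
  have hcos : ∀ k : ℕ, Real.cos (k * δ) = Real.cos (k * |δ|) := by
    intro k
    rcases abs_cases δ with ⟨h, _⟩ | ⟨h, _⟩
    · rw [h]
    · rw [h, mul_neg, Real.cos_neg]
  have hsum : ∑ k ∈ Finset.Icc 2 m, Real.cos (k * δ) / k
      = ∑ k ∈ Finset.Icc 2 m, Real.cos (k * |δ|) / k :=
    Finset.sum_congr rfl fun k _ => by rw [hcos k]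
  rw [hsum]
  exact main_pos habs h12 hm hmδ
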